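/- Let α = α₁···α_k be a product of disjoint cycles in S_n whose lengths are pairwise distinct, and β ∈ S_n with |M(β) \ M(α)| ≤ 1. Suppose there exists an involution ω with M(ω) ⊆ M(α), ω⁻¹βω = β⁻¹, and ω⁻¹α_iω = α_i⁻¹ for all i. Then for every β' ∈ S_n with β'⁻¹αβ' = β⁻¹αβ, there exists a permutation γ with γ⁻¹β'γ = β'⁻¹ and γ⁻¹α_iγ = α_i⁻¹ for all i. -/

import Mathlib

open Equiv Equiv.Perm Finset

section Helpers

variable {G : Type*} [Group G]

lemma conj_eq_self {g h : G} (hc : g * h = h * g) : g⁻¹ * h * g = h := by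
  rw [mul_assoc, ← hc, ← mul_assoc, inv_mul_cancel, one_mul]

lemma conj_eq_self' {g h : G} (hc : g * h = h * g) : g * h * g⁻¹ = h := by
  rw [hc, mul_assoc, mul_inv_cancel, mul_one]

end Helpers

variable {X : Type*} [DecidableEq X] [Fintype X]

/-- Every cycle is inverted by a conjugator supported in its support fixing a
prescribed point. -/
lemma cycle_reflection (c : Perm X) (hc : c.IsCycle) (x : X) :
    ∃ ρ : Perm X, ρ * c * ρ⁻¹ = c⁻¹ ∧ ρ.support ⊆ c.support ∧ ρ x = x := by
  obtain ⟨τ, hτ⟩ := isConj_iff.mp (hc.isConj hc.inv (by rw [support_inv]))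
  have key : ∀ q, τ (c q) = c⁻¹ (τ q) := by
    intro q
    have h1 : τ * c = c⁻¹ * τ := by
      rw [← hτ]; group
    calc τ (c q) = (τ * c) q := rfl
    _ = (c⁻¹ * τ) q := by rw [h1]
    _ = c⁻¹ (τ q) := rfl
  have hmem : ∀ q, q ∈ c.support ↔ τ q ∈ c.support := by
    intro q
    simp only [mem_support]
    constructor
    · intro h h'
      have h2 : c⁻¹ (τ q) = τ q := by
        rw [Equiv.Perm.inv_eq_iff_eq]; exact h'.symm
      exact h (τ.injective (by rw [key q, h2]))
    · intro h h'
      apply h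
      have h2 : c⁻¹ (τ q) = τ q := by rw [← key q, h']
      rw [Equiv.Perm.inv_eq_iff_eq] at h2
      exact h2.symm
  let τ' : Perm X := Equiv.Perm.ofSubtype (τ.subtypePerm (fun q => (hmem q).symm))
  have hτ'mem : ∀ q, q ∈ c.support → τ' q = τ q := fun q hq => by
    simp [τ', Equiv.Perm.ofSubtype_apply_of_mem _ hq]
  have hτ'nmem : ∀ q, q ∉ c.support → τ' q = q := fun q hq =>
    Equiv.Perm.ofSubtype_apply_of_not_mem _ hq
  have hτ's : τ'.support ⊆ c.support := by
    intro q hq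
    by_contra h
    exact (mem_support.mp hq) (hτ'nmem q h)
  have hτ'c : τ' * c = c⁻¹ * τ' := by
    ext q
    show τ' (c q) = c⁻¹ (τ' q)
    by_cases hq : q ∈ c.support
    · have hcq : c q ∈ c.support := apply_mem_support.mpr hq
      rw [hτ'mem _ hcq, hτ'mem _ hq, key]
    · have h1 : c q = q := notMem_support.mp hq
      rw [h1, hτ'nmem _ hq, eq_comm, Equiv.Perm.inv_eq_iff_eq]
      exact h1.symm
  have hτ'conj : τ' * c * τ'⁻¹ = c⁻¹ := by
    rw [mul_inv_eq_iff_eq_mul, hτ'c]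
  by_cases hx : x ∈ c.support
  · have hτ'x : τ' x ∈ c.support := by
      rw [hτ'mem _ hx]; exact (hmem x).mp hx
    obtain ⟨i, hi⟩ := hc.sameCycle (mem_support.mp hτ'x) (mem_support.mp hx)
    refine ⟨c ^ i * τ', ?_, ?_, ?_⟩
    · have hcz : (c ^ i) * c⁻¹ = c⁻¹ * (c ^ i) :=
        (((Commute.refl c).zpow_left i).inv_right).eq
      calc c ^ i * τ' * c * (c ^ i * τ')⁻¹
          = c ^ i * (τ' * c * τ'⁻¹) * (c ^ i)⁻¹ := by group
        _ = c ^ i * c⁻¹ * (c ^ i)⁻¹ := by rw [hτ'conj]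
        _ = c⁻¹ := conj_eq_self' hcz
    · refine (support_mul_le _ _).trans (sup_le ?_ hτ's)
      exact support_zpow_le c i
    · show (c ^ i) (τ' x) = x
      exact hi
  · exact ⟨τ', hτ'conj, hτ's, hτ'nmem _ hx⟩

/-- Every permutation is inverted by a conjugator supported in its support
fixing a prescribed point. -/
lemma perm_reflection (π : Perm X) (x : X) :
    ∃ ρ : Perm X, ρ * π * ρ⁻¹ = π⁻¹ ∧ ρ.support ⊆ π.support ∧ ρ x = x := by
  induction π using Equiv.Perm.cycle_induction_on with
  | base_one => exact ⟨1, by simp, by simp, rfl⟩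
  | base_cycles c hc => exact cycle_reflection c hc x
  | induction_disjoint σ τ hd hσ ih1 ih2 =>
    obtain ⟨ρ₁, h1c, h1s, h1x⟩ := ih1
    obtain ⟨ρ₂, h2c, h2s, h2x⟩ := ih2
    have hds := disjoint_iff_disjoint_support.mp hd
    have c1 : Commute ρ₂ σ :=
      (disjoint_iff_disjoint_support.mpr
        (Finset.disjoint_of_subset_left h2s hds.symm)).commute
    have c2 : Commute ρ₁ τ :=
      (disjoint_iff_disjoint_support.mpr
        (Finset.disjoint_of_subset_left h1s hds)).commute
    refine ⟨ρ₁ * ρ₂, ?_, ?_, ?_⟩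
    · calc (ρ₁ * ρ₂) * (σ * τ) * (ρ₁ * ρ₂)⁻¹
          = ρ₁ * (ρ₂ * σ * ρ₂⁻¹) * (ρ₂ * τ * ρ₂⁻¹) * ρ₁⁻¹ := by group
        _ = ρ₁ * σ * τ⁻¹ * ρ₁⁻¹ := by rw [conj_eq_self' c1.eq, h2c]
        _ = (ρ₁ * σ * ρ₁⁻¹) * (ρ₁ * τ⁻¹ * ρ₁⁻¹) := by group
        _ = σ⁻¹ * τ⁻¹ := by rw [h1c, conj_eq_self' c2.inv_right.eq]
        _ = (σ * τ)⁻¹ := by rw [mul_inv_rev, (hd.commute.inv_inv).eq]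
    · rw [hd.support_mul]
      refine (support_mul_le _ _).trans (sup_le ?_ ?_)
      · exact h1s.trans Finset.subset_union_left
      · exact h2s.trans Finset.subset_union_right
    · show ρ₁ (ρ₂ x) = x
      rw [h2x, h1x]

/-- A permutation commuting with a cycle acts as a power of it on its support. -/
lemma power_on_cycle (c z : Perm X) (hc : c.IsCycle) (hcz : z * c = c * z) :
    ∃ j : ℤ, ∀ p ∈ c.support, z p = (c ^ j) p := by
  have key : ∀ q, z (c q) = c (z q) := by
    intro q
    calc z (c q) = (z * c) q := rfl
    _ = (c * z) q := by rw [hcz]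
    _ = c (z q) := rfl
  have keyz : ∀ (i : ℤ) q, z ((c ^ i) q) = (c ^ i) (z q) := by
    intro i q
    have hcom : Commute z c := hcz
    have h1 : z * c ^ i = c ^ i * z := (hcom.zpow_right i).eq
    calc z ((c ^ i) q) = (z * c ^ i) q := rfl
    _ = (c ^ i * z) q := by rw [h1]
    _ = (c ^ i) (z q) := rfl
  obtain ⟨p₀, hp₀, hall⟩ := hc
  have hz₀ : c (z p₀) ≠ z p₀ := by
    intro h
    rw [← key] at h
    exact hp₀ (z.injective h)
  obtain ⟨j, hj⟩ := hall hz₀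
  refine ⟨j, fun p hp => ?_⟩
  obtain ⟨i, hi⟩ := hall (mem_support.mp hp)
  rw [← hi, keyz]
  rw [← hj]
  calc (c ^ i) ((c ^ j) p₀) = ((c ^ i) * (c ^ j)) p₀ := rfl
  _ = ((c ^ j) * (c ^ i)) p₀ := by rw [(Commute.zpow_zpow_self c i j).eq]
  _ = (c ^ j) ((c ^ i) p₀) := rfl

/-- list product of pointwise-fixing permutations fixes the point. -/
lemma list_prod_fix (l : List (Perm X)) (p : X) (h : ∀ g ∈ l, g p = p) :
    l.prod p = p := by
  induction l with
  | nil => simp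
  | cons g t ih =>
    rw [List.prod_cons]
    show g (t.prod p) = p
    rw [ih (fun g hg => h _ (List.mem_cons_of_mem _ hg)), h g List.mem_cons_self]

/-- commuting element supported off `A` and fixing the unique exceptional
point `x` of `β` outside `A` commutes with `β`. -/
lemma commute_of_almost_disjoint (β σ : Perm X) (A : Finset X) (x : X)
    (hβ : ∀ y, y ∉ A → y ≠ x → β y = y) (hσ : ∀ p ∈ A, σ p = p)
    (hσx : σ x = x) : σ * β = β * σ := by
  have hσ' : ∀ q, σ q ∈ A → q ∈ A := by
    intro q hq
    have h1 : σ q = q := σ.injective (hσ _ hq)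
    rwa [h1] at hq
  have hσx' : ∀ q, σ q = x → q = x := fun q hq => σ.injective (by rw [hq, hσx])
  ext p
  show σ (β p) = β (σ p)
  by_cases hpA : p ∈ A
  · rw [hσ p hpA]
    by_cases h1 : β p ∈ A
    · exact hσ _ h1
    · by_cases h2 : β p = x
      · rw [h2, hσx]
      · have h3 : β p = p := β.injective (hβ _ h1 h2)
        rw [h3] at h1
        exact absurd hpA h1
  · by_cases hpx : p = x
    · subst hpx
      rw [hσx]
      by_cases h1 : β p ∈ A
      · exact hσ _ h1
      · by_cases h2 : β p = p
        · rw [h2, hσx]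
        · exact absurd (β.injective (hβ _ h1 h2)) h2
    · rw [hβ p hpA hpx]
      exact (hβ _ (fun h => hpA (hσ' _ h)) (fun h => hpx (hσx' _ h))).symm
set_option maxHeartbeats 1000000 in
/-- Lemma 4.1 (i): α a product of disjoint cycles of pairwise distinct lengths,
|M(β) \ M(α)| ≤ 1, and ω an involution supported in M(α) inverting β and every
cycle factor of α by conjugation.  Then every β' with α^{β'} = α^β is inverted,
together with all the cycle factors of α, by some γ. -/
theorem stmt_17 {n k : ℕ} (a : Fin k → Equiv.Perm (Fin n))
    (hcyc : ∀ i, (a i).IsCycle)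
    (hdisj : ∀ i j, i ≠ j → (a i).Disjoint (a j))
    (hlen : ∀ i j, i ≠ j → (a i).support.card ≠ (a j).support.card)
    (α β : Equiv.Perm (Fin n)) (hα : α = (List.ofFn a).prod)
    (hβ : (β.support \ α.support).card ≤ 1)
    (ω : Equiv.Perm (Fin n)) (hinv : ω * ω = 1) (hsupp : ω.support ⊆ α.support)
    (hωβ : ω⁻¹ * β * ω = β⁻¹) (hωa : ∀ i, ω⁻¹ * (a i) * ω = (a i)⁻¹) :
    ∀ β' : Equiv.Perm (Fin n), β'⁻¹ * α * β' = β⁻¹ * α * β →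
      ∃ γ : Equiv.Perm (Fin n), γ⁻¹ * β' * γ = β'⁻¹ ∧
        ∀ i, γ⁻¹ * (a i) * γ = (a i)⁻¹ := by
  intro β' hb'
  classical
  set z := β' * β⁻¹ with hzdef
  have hβ'z : β' = z * β := by rw [hzdef]; group
  have h1 : z * α * z⁻¹ = α := by
    rw [hzdef]
    calc β' * β⁻¹ * α * (β' * β⁻¹)⁻¹ = β' * (β⁻¹ * α * β) * β'⁻¹ := by group
      _ = β' * (β'⁻¹ * α * β') * β'⁻¹ := by rw [← hb']
      _ = α := by group
  have hzα : z * α = α * z := mul_inv_eq_iff_eq_mul.mp h1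
  -- the aᵢ are the cycle factors of α
  have hinj : Function.Injective a := by
    intro i j hij
    by_contra hne
    have hd := hdisj i j hne
    rw [hij] at hd
    exact (hcyc j).ne_one (by
      ext x
      rcases hd x with h | h <;> simp [h])
  have hnodup : (List.ofFn a).Nodup := List.nodup_ofFn.mpr hinj
  have hfac : α.cycleFactorsFinset = (List.ofFn a).toFinset := by
    rw [cycleFactorsFinset_eq_list_toFinset hnodup]
    refine ⟨?_, ?_, hα.symm⟩
    · intro f hf
      rw [List.mem_ofFn] at hf
      obtain ⟨i, rfl⟩ := hf
      exact hcyc i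
    · rw [List.pairwise_ofFn]
      intro i j hij
      exact hdisj i j (ne_of_lt hij)
  have hmemfac : ∀ i, a i ∈ α.cycleFactorsFinset := by
    intro i
    rw [hfac, List.mem_toFinset, List.mem_ofFn]
    exact ⟨i, rfl⟩
  have hsuppa : ∀ i, (a i).support ⊆ α.support :=
    fun i => mem_cycleFactorsFinset_support_le (hmemfac i)
  have hfixfac : ∀ i, ∀ p ∈ (a i).support, a i p = α p :=
    fun i => (mem_cycleFactorsFinset_iff.mp (hmemfac i)).2
  -- z commutes with every aᵢ
  have hzai : ∀ i, z * a i * z⁻¹ = a i := by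
    intro i
    have hmem2 : z * a i * z⁻¹ ∈ α.cycleFactorsFinset := by
      rw [mem_cycleFactorsFinset_iff]
      refine ⟨(hcyc i).conj, ?_⟩
      intro p hp
      have hq : a i (z⁻¹ p) ≠ z⁻¹ p := by
        intro h
        apply mem_support.mp hp
        calc (z * a i * z⁻¹) p = z (a i (z⁻¹ p)) := rfl
          _ = z (z⁻¹ p) := by rw [h]
          _ = p := by simp
      calc (z * a i * z⁻¹) p = z (a i (z⁻¹ p)) := rfl
        _ = z (α (z⁻¹ p)) := by rw [hfixfac i _ (mem_support.mpr hq)]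
        _ = (z * α) (z⁻¹ p) := rfl
        _ = (α * z) (z⁻¹ p) := by rw [hzα]
        _ = α (z (z⁻¹ p)) := rfl
        _ = α p := by simp
    rw [hfac, List.mem_toFinset, List.mem_ofFn] at hmem2
    obtain ⟨j, hj⟩ := hmem2
    have hcard : (a j).support.card = (a i).support.card := by
      rw [hj, support_conj, Finset.card_map]
    have hji : j = i := by
      by_contra hne
      exact hlen j i hne hcard
    rw [← hj, hji]
  have hcomza : ∀ i, z * a i = a i * z := fun i => mul_inv_eq_iff_eq_mul.mp (hzai i)
  -- z acts as a power of aᵢ on the support of aᵢ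
  choose km hkm using fun i => power_on_cycle (a i) z (hcyc i) (hcomza i)
  have hcomm : ((Finset.univ : Finset (Fin k)) : Set (Fin k)).Pairwise
      (Function.onFun Commute fun i => a i ^ km i) := by
    intro i _ j _ hij
    exact ((hdisj i j hij).commute).zpow_zpow _ _
  set m := Finset.univ.noncommProd (fun i => a i ^ km i) hcomm with hmdef
  have hcomm_m_a : ∀ j, Commute m (a j) := by
    intro j
    refine (Finset.noncommProd_commute _ _ _ _ ?_).symm
    intro i _
    by_cases h : i = j
    · subst h
      exact (Commute.refl (a i)).zpow_right _
    · exact ((hdisj j i (fun e => h e.symm)).commute).zpow_right _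
  have hsuppm : m.support ⊆ α.support := by
    rw [hmdef]
    apply Finset.noncommProd_induction _ _ _
      (fun g : Equiv.Perm (Fin n) => g.support ⊆ α.support)
    · intro x y hx hy
      exact (support_mul_le x y).trans (sup_le hx hy)
    · simp
    · intro i _
      exact (support_zpow_le _ _).trans (hsuppa i)
  have hωinv : ω⁻¹ = ω := inv_eq_of_mul_eq_one_right hinv
  -- conjugation by ω inverts m
  have hcomm2 : ((Finset.univ : Finset (Fin k)) : Set (Fin k)).Pairwise
      (Function.onFun Commute fun i => (a i ^ km i)⁻¹) := by
    intro i _ j _ hij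
    exact (((hdisj i j hij).commute).zpow_zpow _ _).inv_inv
  have hωm : ω⁻¹ * m * ω = m⁻¹ := by
    have hmap := Finset.map_noncommProd Finset.univ (fun i => a i ^ km i) hcomm
      (MulAut.conj ω⁻¹)
    have hc1 : ∀ i : Fin k, (MulAut.conj ω⁻¹) (a i ^ km i) = (a i ^ km i)⁻¹ := by
      intro i
      rw [map_zpow]
      have h3 : (MulAut.conj ω⁻¹) (a i) = (a i)⁻¹ := by
        simp only [MulAut.conj_apply, inv_inv]
        exact hωa i
      rw [h3, inv_zpow]
    have hmap2 : (MulAut.conj ω⁻¹) m =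
        Finset.univ.noncommProd (fun i => (a i ^ km i)⁻¹) hcomm2 := by
      rw [hmdef, hmap]
      exact Finset.noncommProd_congr rfl (fun i _ => hc1 i) _
    have hd2 := Finset.noncommProd_mul_distrib (s := (Finset.univ : Finset (Fin k)))
      (fun i => a i ^ km i) (fun i => (a i ^ km i)⁻¹) hcomm hcomm2
      (by
        intro i _ j _ hij
        exact ((((hdisj i j hij).commute).zpow_zpow _ _).inv_left))
    have hprodinv : m * Finset.univ.noncommProd (fun i => (a i ^ km i)⁻¹) hcomm2 = 1 := by
      rw [hmdef, ← hd2]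
      rw [Finset.noncommProd_eq_pow_card _ _ _ 1 (fun i _ => by simp)]
      exact one_pow _
    calc ω⁻¹ * m * ω = (MulAut.conj ω⁻¹) m := by rw [MulAut.conj_apply, inv_inv]
      _ = Finset.univ.noncommProd (fun i => (a i ^ km i)⁻¹) hcomm2 := hmap2
      _ = m⁻¹ := (inv_eq_of_mul_eq_one_right hprodinv).symm
  -- the decomposition z = m * π
  set π := m⁻¹ * z with hπdef
  have hzmπ : z = m * π := by rw [hπdef]; group
  have hmp : ∀ i, ∀ p ∈ (a i).support, m p = z p := by
    intro i p hp
    have hrest : ∀ (comm' : ((Finset.univ.erase i : Finset (Fin k)) : Set (Fin k)).Pairwise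
        (Function.onFun Commute fun j => a j ^ km j)),
        ((Finset.univ.erase i).noncommProd (fun j => a j ^ km j) comm') p = p := by
      intro comm'
      apply Finset.noncommProd_induction _ _ _ (fun g : Equiv.Perm (Fin n) => g p = p)
      · intro g1 g2 hg1 hg2
        show g1 (g2 p) = p
        rw [hg2, hg1]
      · rfl
      · intro j hj
        have hji : j ≠ i := (Finset.mem_erase.mp hj).1
        have hpnot : p ∉ (a j).support := by
          intro hpj
          exact (Finset.disjoint_left.mp
            (disjoint_iff_disjoint_support.mp (hdisj j i hji)) hpj) hp
        have hz : p ∉ (a j ^ km j).support := fun h => hpnot (support_zpow_le _ _ h)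
        exact notMem_support.mp hz
    rw [hmdef, ← Finset.mul_noncommProd_erase Finset.univ (Finset.mem_univ i)
      (fun j => a j ^ km j) hcomm]
    rw [mul_apply]; exact (congrArg (a i ^ km i) (hrest _)).trans (hkm i p hp).symm
  have hπfix : ∀ p ∈ α.support, π p = p := by
    intro p hp
    have hex : ∃ i, p ∈ (a i).support := by
      by_contra h
      push_neg at h
      apply mem_support.mp hp
      rw [hα]
      apply list_prod_fix
      intro g hg
      rw [List.mem_ofFn] at hg
      obtain ⟨i, rfl⟩ := hg
      exact notMem_support.mp (h i)
    obtain ⟨i, hpi⟩ := hex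
    rw [hπdef]
    rw [mul_apply, ← hmp i p hpi]
    simp
  have hπsupp : Disjoint π.support α.support :=
    Finset.disjoint_left.mpr (fun p hp hpa => (mem_support.mp hp) (hπfix p hpa))
  have hdisj_of : ∀ g h : Equiv.Perm (Fin n), Disjoint g.support α.support →
      h.support ⊆ α.support → g * h = h * g :=
    fun g h hg hh =>
      ((disjoint_iff_disjoint_support.mpr (Finset.disjoint_of_subset_right hh hg)).commute).eq
  have hπm : π * m = m * π := hdisj_of π m hπsupp hsuppm
  have hπω : π * ω = ω * π := hdisj_of π ω hπsupp hsupp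
  have hωπeq : ω⁻¹ * π * ω = π := conj_eq_self hπω.symm
  suffices hkey : ∃ ρ₀ : Equiv.Perm (Fin n), ρ₀ * π * ρ₀⁻¹ = π⁻¹ ∧
      ρ₀.support ⊆ π.support ∧ (π * ρ₀ * π) * β = β * (π * ρ₀ * π) by
    obtain ⟨ρ₀, hρc, hρs, hσβ⟩ := hkey
    have hρsupp : (π * ρ₀).support ⊆ π.support :=
      (support_mul_le _ _).trans (sup_le le_rfl hρs)
    have hρm : (π * ρ₀) * m = m * (π * ρ₀) :=
      hdisj_of (π * ρ₀) m (Finset.disjoint_of_subset_left hρsupp hπsupp) hsuppm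
    have hρa : ∀ i, (π * ρ₀) * a i = a i * (π * ρ₀) := fun i =>
      hdisj_of (π * ρ₀) (a i) (Finset.disjoint_of_subset_left hρsupp hπsupp) (hsuppa i)
    have e1 : π = ρ₀⁻¹ * π⁻¹ * ρ₀ := by rw [← hρc]; group
    have e2 : π⁻¹ = (ρ₀⁻¹ * π⁻¹ * ρ₀)⁻¹ := by rw [← e1]
    have e3 : ρ₀⁻¹ * π * ρ₀ = π⁻¹ := by rw [e2]; group
    have hρπ : (π * ρ₀)⁻¹ * π * (π * ρ₀) = π⁻¹ := by rw [← e3]; group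
    have hcσβ' : β⁻¹ * ((π * ρ₀) * π) = ((π * ρ₀) * π) * β⁻¹ :=
      ((show Commute ((π * ρ₀) * π) β from hσβ).inv_right.eq).symm
    have hE : (π * ρ₀)⁻¹ * π * β⁻¹ * (π * ρ₀) = β⁻¹ * π⁻¹ := by
      calc (π * ρ₀)⁻¹ * π * β⁻¹ * (π * ρ₀)
          = ((π * ρ₀)⁻¹ * π * (π * ρ₀)) * ((π * ρ₀)⁻¹ * β⁻¹ * (π * ρ₀)) := by group
        _ = π⁻¹ * ((π * ρ₀)⁻¹ * β⁻¹ * (π * ρ₀)) := by rw [hρπ]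
        _ = π⁻¹ * (π * ρ₀)⁻¹ * (β⁻¹ * ((π * ρ₀) * π)) * π⁻¹ := by group
        _ = π⁻¹ * (π * ρ₀)⁻¹ * (((π * ρ₀) * π) * β⁻¹) * π⁻¹ := by rw [hcσβ']
        _ = β⁻¹ * π⁻¹ := by group
    refine ⟨ω * m⁻¹ * (π * ρ₀), ?_, ?_⟩
    · have hβ'₂ : β' = m * π * β := by rw [hβ'z, hzmπ]
      have hconjω : ω⁻¹ * (m * π * β) * ω = m⁻¹ * π * β⁻¹ := by
        calc ω⁻¹ * (m * π * β) * ω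
            = (ω⁻¹ * m * ω) * (ω⁻¹ * π * ω) * (ω⁻¹ * β * ω) := by group
          _ = m⁻¹ * π * β⁻¹ := by rw [hωm, hωπeq, hωβ]
      have hρminv : (π * ρ₀)⁻¹ * m⁻¹ * (π * ρ₀) = m⁻¹ :=
        conj_eq_self ((show Commute (π * ρ₀) m from hρm).inv_right.eq)
      calc (ω * m⁻¹ * (π * ρ₀))⁻¹ * β' * (ω * m⁻¹ * (π * ρ₀))
          = (π * ρ₀)⁻¹ * m * (ω⁻¹ * (m * π * β) * ω) * m⁻¹ * (π * ρ₀) := by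
            rw [hβ'₂]; group
        _ = (π * ρ₀)⁻¹ * m * (m⁻¹ * π * β⁻¹) * m⁻¹ * (π * ρ₀) := by rw [hconjω]
        _ = ((π * ρ₀)⁻¹ * π * β⁻¹ * (π * ρ₀)) * ((π * ρ₀)⁻¹ * m⁻¹ * (π * ρ₀)) := by group
        _ = (β⁻¹ * π⁻¹) * m⁻¹ := by rw [hE, hρminv]
        _ = β'⁻¹ := by rw [hβ'₂]; group
    · intro i
      have h5 : m * (a i)⁻¹ * m⁻¹ = (a i)⁻¹ :=
        conj_eq_self' ((hcomm_m_a i).inv_right.eq)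
      have h6 : (π * ρ₀)⁻¹ * (a i)⁻¹ * (π * ρ₀) = (a i)⁻¹ :=
        conj_eq_self ((show Commute (π * ρ₀) (a i) from hρa i).inv_right.eq)
      calc (ω * m⁻¹ * (π * ρ₀))⁻¹ * a i * (ω * m⁻¹ * (π * ρ₀))
          = (π * ρ₀)⁻¹ * (m * (ω⁻¹ * a i * ω) * m⁻¹) * (π * ρ₀) := by group
        _ = (π * ρ₀)⁻¹ * (m * (a i)⁻¹ * m⁻¹) * (π * ρ₀) := by rw [hωa i]
        _ = (π * ρ₀)⁻¹ * (a i)⁻¹ * (π * ρ₀) := by rw [h5]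
        _ = (a i)⁻¹ := h6
  rcases Finset.eq_empty_or_nonempty (β.support \ α.support) with hS | ⟨x, hxS⟩
  · have hβα : β.support ⊆ α.support := by
      rwa [Finset.sdiff_eq_empty_iff_subset] at hS
    rcases isEmpty_or_nonempty (Fin n) with hEm | hNE
    · have hall : ∀ g : Equiv.Perm (Fin n), g = 1 :=
        fun g => Equiv.ext (fun p => (IsEmpty.false p).elim)
      refine ⟨1, ?_, ?_, ?_⟩
      · rw [hall π]; simp
      · simp
      · rw [hall π, hall β]; simp
    · obtain ⟨x₀⟩ := hNE
      obtain ⟨ρ₀, h1, h2, _⟩ := perm_reflection π x₀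
      refine ⟨ρ₀, h1, h2, ?_⟩
      have hsupσ : (π * ρ₀ * π).support ⊆ π.support :=
        (support_mul_le _ _).trans
          (sup_le ((support_mul_le _ _).trans (sup_le le_rfl h2)) le_rfl)
      exact hdisj_of (π * ρ₀ * π) β (Finset.disjoint_of_subset_left hsupσ hπsupp) hβα
  · obtain ⟨hxβ, hxα⟩ := Finset.mem_sdiff.mp hxS
    obtain ⟨ρ₀, h1, h2, h3⟩ := perm_reflection π x
    refine ⟨ρ₀, h1, h2, ?_⟩
    apply commute_of_almost_disjoint β (π * ρ₀ * π) α.support x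
    · intro y hy hyx
      by_contra h
      exact hyx (Finset.card_le_one.mp hβ y
        (Finset.mem_sdiff.mpr ⟨mem_support.mpr h, hy⟩) x hxS)
    · intro p hp
      have hπp : π p = p := hπfix p hp
      have hnp : p ∉ ρ₀.support := fun hmem => (mem_support.mp (h2 hmem)) hπp
      have hρ₀p : ρ₀ p = p := notMem_support.mp hnp
      show π (ρ₀ (π p)) = p
      rw [hπp, hρ₀p, hπp]
    · have hρ₀invx : ρ₀⁻¹ x = x := ρ₀.injective (by rw [h3]; simp)
      have hρ₀πx : ρ₀ (π x) = π⁻¹ x := by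
        have h7 : (ρ₀ * π * ρ₀⁻¹) x = π⁻¹ x := by rw [h1]
        rw [show (ρ₀ * π * ρ₀⁻¹) x = ρ₀ (π (ρ₀⁻¹ x)) from rfl, hρ₀invx] at h7
        exact h7
      show π (ρ₀ (π x)) = x
      rw [hρ₀πx]
      simp
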